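/- The normalizer of the subgroup R_C = Δ × {0} in the group G = (SL(2,ℂ) × SL(2,ℂ)) ⋊ ℤ/2ℤ equals the subgroup {(h, ε) ∈ G : h ∈ H, ε ∈ ℤ/2ℤ} (i.e. N_G(R_C) = H ⋊ ℤ/2ℤ). -/

import Mathlib

open Matrix

abbrev SL2 := Matrix.SpecialLinearGroup (Fin 2) ℂ

instance : Fact (Even (Fintype.card (Fin 2))) := ⟨by simp⟩

/-- The diagonal subgroup `R_C = Δ = {(A,A) : A ∈ SL(2,ℂ)}` of `SL(2,ℂ) × SL(2,ℂ)`. -/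
def Delta : Subgroup (SL2 × SL2) where
  carrier := {p | p.2 = p.1}
  one_mem' := rfl
  mul_mem' := by
    intro a b ha hb
    simp only [Set.mem_setOf_eq] at *
    rw [Prod.snd_mul, Prod.fst_mul, ha, hb]
  inv_mem' := by
    intro a ha
    simp only [Set.mem_setOf_eq] at *
    rw [Prod.snd_inv, Prod.fst_inv, ha]

/-- The subgroup `H = {(A, εA) : A ∈ SL(2,ℂ), ε ∈ {1,−1}}` of `SL(2,ℂ) × SL(2,ℂ)`. -/
def Hsub : Subgroup (SL2 × SL2) where
  carrier := {p | p.2 = p.1 ∨ p.2 = -p.1}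
  one_mem' := Or.inl rfl
  mul_mem' := by
    intro a b ha hb
    simp only [Set.mem_setOf_eq, Prod.snd_mul, Prod.fst_mul] at *
    rcases ha with ha | ha <;> rcases hb with hb | hb <;> rw [ha, hb] <;>
      simp [mul_neg, neg_mul, neg_neg]
  inv_mem' := by
    intro a ha
    simp only [Set.mem_setOf_eq, Prod.snd_inv, Prod.fst_inv] at *
    rcases ha with ha | ha <;> rw [ha] <;> simp [inv_neg]

/-- The swap automorphism of `SL(2,ℂ) × SL(2,ℂ)`. -/
def swapAut : MulAut (SL2 × SL2) := (MulEquiv.prodComm : (SL2 × SL2) ≃* (SL2 × SL2))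

lemma swapAut_apply (p : SL2 × SL2) : swapAut p = p.swap := rfl

lemma swapAut_sq : swapAut * swapAut = 1 := by
  apply MulEquiv.ext
  intro x
  rw [MulAut.mul_apply, swapAut_apply, swapAut_apply, Prod.swap_swap]
  rfl

/-- The homomorphism `ℤ/2ℤ →* MulAut N` determined by an automorphism of order
dividing 2, sending the nontrivial element to that automorphism. -/
def hom2 {N : Type*} [Group N] (σ : MulAut N) (h : σ * σ = 1) :
    Multiplicative (ZMod 2) →* MulAut N where
  toFun e := σ ^ (Multiplicative.toAdd e).val
  map_one' := by simp
  map_mul' a b := by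
    have h2 : σ ^ 2 = 1 := by rw [pow_two]; exact h
    show σ ^ (Multiplicative.toAdd (a * b)).val = _
    rw [toAdd_mul, ZMod.val_add, ← pow_eq_pow_mod _ h2, pow_add]

/-- The group `G = (SL(2,ℂ) × SL(2,ℂ)) ⋊ ℤ/2ℤ`, the nontrivial element of `ℤ/2ℤ`
acting by swapping the two factors. -/
abbrev Ggrp := (SL2 × SL2) ⋊[hom2 swapAut swapAut_sq] Multiplicative (ZMod 2)

lemma pow_swapAut_mem (K : Subgroup (SL2 × SL2)) (hswap : ∀ p ∈ K, Prod.swap p ∈ K) :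
    ∀ (n : ℕ) (p : SL2 × SL2), p ∈ K → (swapAut ^ n) p ∈ K := by
  intro n
  induction n with
  | zero => intro p hp; simpa using hp
  | succ m ih =>
    intro p hp
    rw [pow_succ, MulAut.mul_apply]
    exact ih _ (by rw [swapAut_apply]; exact hswap p hp)

/-- For a swap-invariant subgroup `K` of `SL(2,ℂ) × SL(2,ℂ)`, the subgroup
`{(h, ε) ∈ G : h ∈ K, ε ∈ ℤ/2ℤ} = K ⋊ ℤ/2ℤ` of `G`. -/
def liftSub (K : Subgroup (SL2 × SL2)) (hswap : ∀ p ∈ K, Prod.swap p ∈ K) :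
    Subgroup Ggrp where
  carrier := {x | x.left ∈ K}
  one_mem' := by
    show (1 : Ggrp).left ∈ K
    rw [SemidirectProduct.one_left]
    exact K.one_mem
  mul_mem' := by
    intro a b ha hb
    show (a * b).left ∈ K
    rw [SemidirectProduct.mul_left]
    exact K.mul_mem ha (pow_swapAut_mem K hswap _ _ hb)
  inv_mem' := by
    intro a ha
    show a⁻¹.left ∈ K
    rw [SemidirectProduct.inv_left]
    exact pow_swapAut_mem K hswap _ _ (K.inv_mem ha)

lemma Hsub_swap_invariant : ∀ p ∈ Hsub, Prod.swap p ∈ Hsub := by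
  intro p hp
  rcases hp with h | h
  · exact Or.inl h.symm
  · exact Or.inr (by show p.1 = -p.2; rw [h, neg_neg])

/-- **Proposition 4.6(i).** The normalizer of `R_C = Δ × {0}` in
`G = (SL(2,ℂ) × SL(2,ℂ)) ⋊ ℤ/2ℤ` equals the subgroup
`H ⋊ ℤ/2ℤ = {(h, ε) ∈ G : h ∈ H}`. -/

lemma central_sl2 (c : SL2) (h : ∀ a : SL2, c * a = a * c) : c = 1 ∨ c = -1 := by
  have hc : c ∈ Subgroup.center SL2 := Subgroup.mem_center_iff.mpr fun g => (h g).symm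
  obtain ⟨r, hr, hr'⟩ := Matrix.SpecialLinearGroup.mem_center_iff.mp hc
  rw [Fintype.card_fin] at hr
  rcases sq_eq_one_iff.mp hr with h1 | h1
  · left
    ext i j
    subst h1
    rw [← hr', _root_.map_one]
    rfl
  · right
    ext i j
    subst h1
    rw [← hr', map_neg, _root_.map_one]
    simp [Matrix.SpecialLinearGroup.coe_neg]

lemma conj_inl (x : Ggrp) (n : SL2 × SL2) :
    x * SemidirectProduct.inl n * x⁻¹ =
      SemidirectProduct.inl (x.left * (hom2 swapAut swapAut_sq x.right) n * x.left⁻¹) := by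
  refine SemidirectProduct.ext ?_ ?_ <;>
    simp [SemidirectProduct.mul_left, SemidirectProduct.mul_right,
      SemidirectProduct.inv_left, SemidirectProduct.inv_right, map_inv, mul_assoc]

lemma pow_swapAut_fix (n : SL2 × SL2) (h : Prod.swap n = n) (k : ℕ) :
    (swapAut ^ k) n = n := by
  induction k with
  | zero => simp
  | succ m ih => rw [pow_succ, MulAut.mul_apply, swapAut_apply, h, ih]

lemma phi_diag (x : Ggrp) (A : SL2) :
    (hom2 swapAut swapAut_sq x.right) (A, A) = (A, A) := by
  show (swapAut ^ _) (A, A) = (A, A)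
  exact pow_swapAut_fix _ rfl _

lemma conj_mem_aux (x : Ggrp) (hx : x.left ∈ Hsub) (g : Ggrp)
    (hg : g ∈ Delta.map (SemidirectProduct.inl : (SL2 × SL2) →* Ggrp)) :
    x * g * x⁻¹ ∈ Delta.map (SemidirectProduct.inl : (SL2 × SL2) →* Ggrp) := by
  obtain ⟨m, hm, rfl⟩ := hg
  have hm' : m = (m.1, m.1) := by
    have : m.2 = m.1 := hm
    cases m; simp_all
  rw [hm', conj_inl, phi_diag]
  refine ⟨_, ?_, rfl⟩
  rcases hx with h | h
  · show _ = _
    simp [Prod.mul_def, h]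
  · show _ = _
    simp only [Prod.mul_def, Prod.fst_inv, Prod.snd_inv, h]
    rw [inv_neg, neg_mul, mul_neg, neg_mul, neg_neg]

theorem normalizer_RC_eq_H_semidirect :
    Subgroup.normalizer ((Delta.map (SemidirectProduct.inl : (SL2 × SL2) →* Ggrp) : Set Ggrp))
      = liftSub Hsub Hsub_swap_invariant := by
  ext x
  rw [Subgroup.mem_normalizer_iff]
  constructor
  · intro h
    show x.left ∈ Hsub
    have key : ∀ A : SL2, x.left.2 * A * x.left.2⁻¹ = x.left.1 * A * x.left.1⁻¹ := by
      intro A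
      have h1 : x * SemidirectProduct.inl (A, A) * x⁻¹ ∈
          Delta.map (SemidirectProduct.inl : (SL2 × SL2) →* Ggrp) :=
        (h _).mp ⟨(A, A), rfl, rfl⟩
      rw [conj_inl, phi_diag] at h1
      have h2 := Subgroup.mem_map_iff_mem SemidirectProduct.inl_injective |>.mp h1
      have h3 : (x.left * (A, A) * x.left⁻¹).2 = (x.left * (A, A) * x.left⁻¹).1 := h2
      simpa using h3
    have hcomm : ∀ A : SL2, (x.left.1⁻¹ * x.left.2) * A = A * (x.left.1⁻¹ * x.left.2) := by
      intro A
      have hk := key A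
      calc x.left.1⁻¹ * x.left.2 * A
            = x.left.1⁻¹ * (x.left.2 * A * x.left.2⁻¹) * x.left.2 := by group
        _ = x.left.1⁻¹ * (x.left.1 * A * x.left.1⁻¹) * x.left.2 := by rw [hk]
        _ = A * (x.left.1⁻¹ * x.left.2) := by group
    rcases central_sl2 _ hcomm with h1 | h1
    · left
      have : x.left.2 = x.left.1 * (x.left.1⁻¹ * x.left.2) := by group
      rw [this, h1, mul_one]
    · right
      have : x.left.2 = x.left.1 * (x.left.1⁻¹ * x.left.2) := by group
      rw [this, h1, mul_neg, mul_one]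
  · intro hx g
    constructor
    · exact conj_mem_aux x hx g
    · intro hg
      have := conj_mem_aux x⁻¹ ((liftSub Hsub Hsub_swap_invariant).inv_mem hx) _ hg
      simpa [mul_assoc] using this
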